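/- arXiv:2201.04671 — 6 statements merged into one kernel-verified Lean document; each statement's English description precedes it below -/
import Mathlib

section
/- Let f : [0,∞) → [0,∞) be a non-increasing, locally integrable function and let K > 0 be a constant such that ∫_t^∞ f(τ) dτ ≤ K · f(t) for every t ≥ 0. Then f(t) ≤ f(0) · e^{1 − t/K} for every t ≥ 0. -/
open MeasureTheory Set Real Filter Topology

/-- Komornik's integral decay lemma: a nonnegative, non-increasing, locally integrable
function on `[0, ∞)` whose tail integral `∫_t^∞ f` is bounded by `K · f t` for all `t ≥ 0`
decays exponentially: `f t ≤ f 0 · exp (1 - t / K)`. -/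
theorem stmt_0 (f : ℝ → ℝ) (K : ℝ) (hK : 0 < K)
    (hf_nonneg : ∀ t, 0 ≤ t → 0 ≤ f t)
    (hf_mono : AntitoneOn f (Set.Ici (0 : ℝ)))
    (hf_int : ∀ t, 0 ≤ t → MeasureTheory.IntegrableOn f (Set.Ioi t))
    (htail : ∀ t, 0 ≤ t → ∫ τ in Set.Ioi t, f τ ≤ K * f t) :
    ∀ t, 0 ≤ t → f t ≤ f 0 * Real.exp (1 - t / K) := by
  set F : ℝ → ℝ := fun t => ∫ τ in Set.Ioi t, f τ with hF
  -- basic facts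
  have hFnonneg : ∀ t, 0 ≤ t → 0 ≤ F t := by
    intro t ht
    apply setIntegral_nonneg measurableSet_Ioi
    intro x hx
    exact hf_nonneg x (le_of_lt (lt_of_le_of_lt ht hx))
  have hsplit : ∀ t s : ℝ, 0 ≤ t → 0 ≤ s →
      F t = (∫ τ in Set.Ioc t (t + s), f τ) + F (t + s) := by
    intro t s ht hs
    have hsub : Set.Ioc t (t + s) ⊆ Set.Ioi t := Set.Ioc_subset_Ioi_self
    have h1 : IntegrableOn f (Set.Ioc t (t + s)) := (hf_int t ht).mono_set hsub
    have h2 : IntegrableOn f (Set.Ioi (t + s)) := hf_int (t + s) (by linarith)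
    rw [hF]
    simp only
    rw [← Set.Ioc_union_Ioi_eq_Ioi (by linarith : t ≤ t + s)]
    exact setIntegral_union (Set.Ioc_disjoint_Ioi le_rfl) measurableSet_Ioi h1 h2
  have hchunk : ∀ t s : ℝ, 0 ≤ t → 0 ≤ s →
      s * f (t + s) ≤ ∫ τ in Set.Ioc t (t + s), f τ := by
    intro t s ht hs
    have h1 : IntegrableOn f (Set.Ioc t (t + s)) :=
      (hf_int t ht).mono_set Set.Ioc_subset_Ioi_self
    have := setIntegral_ge_of_const_le_real (c := f (t + s)) measurableSet_Ioc
      (by simp) (fun x hx => hf_mono (Set.mem_Ici.mpr (by linarith [hx.1] : (0:ℝ) ≤ x)) (Set.mem_Ici.mpr (by linarith)) hx.2) h1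
    calc s * f (t + s) = f (t + s) * (volume (Set.Ioc t (t+s))).toReal := by
            rw [Real.volume_Ioc]; rw [ENNReal.toReal_ofReal (by linarith)]; ring_nf
      _ ≤ _ := this
  -- key step: F (t+s) * (1 + s/K) ≤ F t
  have hstep : ∀ t s : ℝ, 0 ≤ t → 0 ≤ s → F (t + s) * (1 + s / K) ≤ F t := by
    intro t s ht hs
    have h1 := hsplit t s ht hs
    have h2 := hchunk t s ht hs
    have h3 := htail (t + s) (by linarith)
    -- F(t+s) ≤ K * f(t+s), so (s/K) * F(t+s) ≤ s * f(t+s)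
    have h4 : F (t + s) * (s / K) ≤ s * f (t + s) := by
      have : F (t + s) * (s / K) = (s / K) * (K * f (t+s)) - (s/K) * (K * f (t+s) - F (t+s)) := by ring
      rw [this]
      have h5 : 0 ≤ s / K := div_nonneg hs hK.le
      have h6 : 0 ≤ (s/K) * (K * f (t+s) - F (t+s)) := mul_nonneg h5 (by linarith)
      have : (s / K) * (K * f (t + s)) = s * f (t + s) := by field_simp
      linarith
    nlinarith [hFnonneg (t+s) (by linarith)]
  -- iterate: F (n • s) ≤ F 0 / (1 + s/K)^n
  have hiter : ∀ (n : ℕ) (s : ℝ), 0 ≤ s → F (n * s) * (1 + s / K) ^ n ≤ F 0 := by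
    intro n s hs
    induction n with
    | zero => simp
    | succ n ih =>
      have hpos : (0:ℝ) ≤ (1 + s / K) ^ n := by positivity
      have := hstep (n * s) s (by positivity) hs
      calc F ((n+1 : ℕ) * s) * (1 + s / K) ^ (n+1)
          = (F ((n:ℝ) * s + s) * (1 + s / K)) * (1 + s / K) ^ n := by
            push_cast; ring_nf
        _ ≤ F ((n:ℝ) * s) * (1 + s / K) ^ n := mul_le_mul_of_nonneg_right this hpos
        _ ≤ F 0 := ih
  -- limit: F t ≤ F 0 * exp (-t/K)
  have hFdecay : ∀ t : ℝ, 0 ≤ t → F t ≤ F 0 * Real.exp (-(t / K)) := by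
    intro t ht
    have hlim : Tendsto (fun n : ℕ => F 0 / (1 + (t / K) / n) ^ n) atTop
        (𝓝 (F 0 * Real.exp (-(t / K)))) := by
      have h := Real.tendsto_one_add_div_pow_exp (t / K)
      have hne : Real.exp (t / K) ≠ 0 := (Real.exp_pos _).ne'
      have := (tendsto_const_nhds (x := F 0)).div h hne
      rw [Real.exp_neg, ← div_eq_mul_inv]; exact this
    refine ge_of_tendsto' hlim ?_
    intro n
    rcases Nat.eq_zero_or_pos n with hn | hn
    · subst hn
      simp only [Nat.cast_zero, pow_zero, div_one, div_zero, add_zero]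
      have h := hstep 0 t le_rfl ht
      rw [zero_add] at h
      nlinarith [hFnonneg t ht, div_nonneg ht hK.le]
    · have hnpos : (0:ℝ) < n := by exact_mod_cast hn
      have hs : (0:ℝ) ≤ t / n := by positivity
      have := hiter n (t / n) hs
      have ht' : (n : ℝ) * (t / n) = t := by field_simp
      rw [ht'] at this
      have heq : (t / K) / n = (t / n) / K := by ring
      rw [heq]
      have hppos : (0:ℝ) < (1 + (t / n) / K) ^ n := by positivity
      rw [le_div_iff₀ hppos]
      exact this
  -- conclude
  intro t ht
  rcases le_or_gt t K with h | h
  · have h1 : f t ≤ f 0 := hf_mono (Set.mem_Ici.mpr le_rfl) (Set.mem_Ici.mpr ht) ht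
    have h2 : (1:ℝ) ≤ Real.exp (1 - t / K) := by
      apply Real.one_le_exp
      have : t / K ≤ 1 := (div_le_one hK).mpr h
      linarith
    nlinarith [hf_nonneg 0 le_rfl]
  · have htK : 0 ≤ t - K := by linarith
    have h1 : K * f t ≤ F (t - K) := by
      have hsp := hsplit (t - K) K htK hK.le
      have hch := hchunk (t - K) K htK hK.le
      have : t - K + K = t := by ring
      rw [this] at hsp hch
      have := hFnonneg t (by linarith)
      linarith
    have h2 : F (t - K) ≤ F 0 * Real.exp (-((t - K) / K)) := hFdecay (t - K) htK
    have h3 : F 0 ≤ K * f 0 := htail 0 le_rfl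
    have hexp : Real.exp (-((t - K) / K)) = Real.exp (1 - t / K) := by
      congr 1; field_simp; ring
    have hepos : 0 < Real.exp (1 - t / K) := Real.exp_pos _
    have h4 : K * f t ≤ K * f 0 * Real.exp (1 - t / K) := by
      calc K * f t ≤ F (t - K) := h1
        _ ≤ F 0 * Real.exp (1 - t / K) := by rw [← hexp]; exact h2
        _ ≤ K * f 0 * Real.exp (1 - t / K) :=
            mul_le_mul_of_nonneg_right h3 hepos.le
    have := le_of_mul_le_mul_left (by linarith : K * f t ≤ K * (f 0 * Real.exp (1 - t / K))) hK
    exact this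
end

section
/- Let (U, μ) be a measure space with μ(U) < ∞, let p > 1, set r = (2p+2)/(2p+1), and let f : U → ℝ be measurable with ∫_U |f|^{p+1} dμ ≤ M for some constant M ≥ 0. Then ∫_U ( |f|^p · |log|f|| )^r dμ ≤ μ(U)/(p·e)^r + (2/e)^r · M, with the convention that |f|^p·log|f| = 0 wherever f = 0. -/
open MeasureTheory

lemma log_le_div_e {s : ℝ} (hs : 0 < s) : Real.log s ≤ s / Real.exp 1 := by
  have he : (0:ℝ) < Real.exp 1 := Real.exp_pos 1
  have h := Real.log_le_sub_one_of_pos (div_pos hs he)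
  rw [Real.log_div (ne_of_gt hs) (ne_of_gt he), Real.log_exp] at h
  linarith

lemma key_pointwise (p r : ℝ) (hp : 1 < p) (hr : r = (2 * p + 2) / (2 * p + 1))
    (t : ℝ) (ht : 0 ≤ t) :
    (t ^ p * |Real.log t|) ^ r ≤
      (1 / (p * Real.exp 1)) ^ r + (2 / Real.exp 1) ^ r * t ^ (p + 1) := by
  have he : (0:ℝ) < Real.exp 1 := Real.exp_pos 1
  have hp0 : (0:ℝ) < p := by linarith
  have hden : (0:ℝ) < 2 * p + 1 := by linarith
  have hr0 : 0 < r := by rw [hr]; exact div_pos (by linarith) hden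
  rcases eq_or_lt_of_le ht with h0 | h0
  · -- t = 0
    rw [← h0, Real.zero_rpow (ne_of_gt hp0), Real.log_zero, abs_zero, mul_zero,
      Real.zero_rpow (ne_of_gt hr0), Real.zero_rpow (by positivity : p + 1 ≠ 0)]
    positivity
  rcases lt_or_ge t 1 with h1 | h1
  · -- 0 < t < 1
    have hlog : Real.log t < 0 := Real.log_neg h0 h1
    have hu : 0 < t ^ p := Real.rpow_pos_of_pos h0 p
    have hlu : Real.log (1 / t ^ p) ≤ (1 / t ^ p) / Real.exp 1 :=
      log_le_div_e (by positivity)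
    have hlog_eq : Real.log (1 / t ^ p) = -(p * Real.log t) := by
      rw [one_div, Real.log_inv, Real.log_rpow h0]
    rw [hlog_eq] at hlu
    have hA : t ^ p * |Real.log t| ≤ 1 / (p * Real.exp 1) := by
      rw [abs_of_neg hlog]
      have e1 : t ^ p * (-Real.log t) = (t ^ p / p) * (-(p * Real.log t)) := by
        field_simp
      have e2 : (t ^ p / p) * ((1 / t ^ p) / Real.exp 1) = 1 / (p * Real.exp 1) := by
        field_simp
      calc t ^ p * (-Real.log t) = (t ^ p / p) * (-(p * Real.log t)) := e1
        _ ≤ (t ^ p / p) * ((1 / t ^ p) / Real.exp 1) :=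
            mul_le_mul_of_nonneg_left hlu (by positivity)
        _ = 1 / (p * Real.exp 1) := e2
    have hB : (t ^ p * |Real.log t|) ^ r ≤ (1 / (p * Real.exp 1)) ^ r :=
      Real.rpow_le_rpow (by positivity) hA (le_of_lt hr0)
    have : 0 ≤ (2 / Real.exp 1) ^ r * t ^ (p + 1) := by positivity
    linarith
  · -- 1 ≤ t
    have hlog : 0 ≤ Real.log t := Real.log_nonneg h1
    have hsq : 0 < t ^ ((1:ℝ)/2) := Real.rpow_pos_of_pos h0 _
    have hlu : Real.log (t ^ ((1:ℝ)/2)) ≤ t ^ ((1:ℝ)/2) / Real.exp 1 :=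
      log_le_div_e hsq
    rw [Real.log_rpow h0] at hlu
    have hB : t ^ p * |Real.log t| ≤ (2 / Real.exp 1) * t ^ (p + 1/2) := by
      rw [abs_of_nonneg hlog]
      have h2 : Real.log t ≤ 2 * (t ^ ((1:ℝ)/2) / Real.exp 1) := by linarith
      calc t ^ p * Real.log t ≤ t ^ p * (2 * (t ^ ((1:ℝ)/2) / Real.exp 1)) :=
            mul_le_mul_of_nonneg_left h2 (by positivity)
        _ = (2 / Real.exp 1) * (t ^ p * t ^ ((1:ℝ)/2)) := by ring
        _ = (2 / Real.exp 1) * t ^ (p + 1/2) := by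
            rw [← Real.rpow_add h0]
    have hexp : (p + 1/2) * r = p + 1 := by
      rw [hr]; field_simp
    have hC : (t ^ p * |Real.log t|) ^ r ≤ ((2 / Real.exp 1) * t ^ (p + 1/2)) ^ r :=
      Real.rpow_le_rpow (by positivity) hB (le_of_lt hr0)
    have hD : ((2 / Real.exp 1) * t ^ (p + 1/2)) ^ r
        = (2 / Real.exp 1) ^ r * t ^ (p + 1) := by
      rw [Real.mul_rpow (by positivity) (by positivity), ← Real.rpow_mul ht, hexp]
    have : 0 ≤ (1 / (p * Real.exp 1)) ^ r := by positivity
    rw [hD] at hC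
    linarith

/-- Uniform `L^r` bound for the nonlinearity: if `μ` is a finite measure, `p > 1`,
`r = (2p+2)/(2p+1)`, `f` is measurable with `∫ |f|^(p+1) dμ ≤ M` (and the integrand
is integrable), then `∫ (|f|^p · |log |f||)^r dμ ≤ μ(U)/(pe)^r + (2/e)^r · M`.
(Since `Real.log 0 = 0` and `0 ^ p = 0` for `p > 0`, the integrand vanishes where `f = 0`.) -/
theorem stmt_4 {U : Type*} [MeasurableSpace U] (μ : Measure U) [IsFiniteMeasure μ]
    (p r : ℝ) (hp : 1 < p) (hr : r = (2 * p + 2) / (2 * p + 1))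
    (f : U → ℝ) (hf : Measurable f) (M : ℝ) (hM : 0 ≤ M)
    (hint : Integrable (fun x => |f x| ^ (p + 1)) μ)
    (hbound : ∫ x, |f x| ^ (p + 1) ∂μ ≤ M) :
    ∫ x, (|f x| ^ p * (abs (Real.log |f x|))) ^ r ∂μ ≤
      (μ Set.univ).toReal / (p * Real.exp 1) ^ r + (2 / Real.exp 1) ^ r * M := by
  have he : (0:ℝ) < Real.exp 1 := Real.exp_pos 1
  have hp0 : (0:ℝ) < p := by linarith
  set c1 : ℝ := (1 / (p * Real.exp 1)) ^ r with hc1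
  set c2 : ℝ := (2 / Real.exp 1) ^ r with hc2
  have hc2pos : 0 ≤ c2 := by positivity
  have hintb : Integrable (fun x => c1 + c2 * |f x| ^ (p + 1)) μ :=
    (integrable_const c1).add (hint.const_mul c2)
  have h1 : ∫ x, (|f x| ^ p * (abs (Real.log |f x|))) ^ r ∂μ ≤
      ∫ x, (c1 + c2 * |f x| ^ (p + 1)) ∂μ := by
    apply integral_mono_of_nonneg
    · filter_upwards with x
      positivity
    · exact hintb
    · filter_upwards with x
      exact key_pointwise p r hp hr (|f x|) (abs_nonneg _)
  have h2 : ∫ x, (c1 + c2 * |f x| ^ (p + 1)) ∂μ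
      = (μ Set.univ).toReal * c1 + c2 * ∫ x, |f x| ^ (p + 1) ∂μ := by
    rw [integral_add (integrable_const c1) (hint.const_mul c2), integral_const,
      integral_const_mul, smul_eq_mul, measureReal_def]
  have h3 : (μ Set.univ).toReal * c1 = (μ Set.univ).toReal / (p * Real.exp 1) ^ r := by
    rw [hc1, Real.div_rpow zero_le_one (by positivity), Real.one_rpow]
    ring
  have h4 : c2 * ∫ x, |f x| ^ (p + 1) ∂μ ≤ c2 * M :=
    mul_le_mul_of_nonneg_left hbound hc2pos
  calc _ ≤ (μ Set.univ).toReal * c1 + c2 * ∫ x, |f x| ^ (p + 1) ∂μ := h1.trans_eq h2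
    _ ≤ (μ Set.univ).toReal / (p * Real.exp 1) ^ r + c2 * M := by rw [h3]; linarith
end

section
/- Let p > 1, a > 0, b > 0 and c ∈ ℝ. Then there exists a unique ζ* > 0 such that a·ζ* − (ζ*)^p·(c + b·log ζ*) = 0; equivalently, the function g(ζ) = (a/2)·ζ² − (1/(p+1))·ζ^{p+1}·(c + b·log ζ) + (b/(p+1)²)·ζ^{p+1} has exactly one critical point on (0,∞). -/
open Real Filter

/-- There exists a unique `ζ* > 0` with `a·ζ* − (ζ*)^p (c + b log ζ*) = 0`,
i.e. the fibering map has exactly one critical point on `(0, ∞)`. -/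
theorem stmt_7 (p a b c : ℝ) (hp : 1 < p) (ha : 0 < a) (hb : 0 < b) :
    ∃! ζ : ℝ, 0 < ζ ∧ a * ζ - ζ ^ p * (c + b * Real.log ζ) = 0 := by
  set h : ℝ → ℝ := fun ζ => a * ζ ^ (1 - p) - (c + b * Real.log ζ) with hh
  -- equivalence of the equation with h ζ = 0
  have key : ∀ ζ : ℝ, 0 < ζ → (a * ζ - ζ ^ p * (c + b * Real.log ζ) = 0 ↔ h ζ = 0) := by
    intro ζ hζ
    have hfac : a * ζ - ζ ^ p * (c + b * Real.log ζ) = ζ ^ p * h ζ := by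
      have h1 : ζ ^ p * (a * ζ ^ (1 - p)) = a * ζ := by
        rw [mul_comm a, ← mul_assoc, ← Real.rpow_add hζ]
        simp [mul_comm]
      simp only [hh, mul_sub, h1]
    rw [hfac]
    constructor
    · intro h0
      rcases mul_eq_zero.mp h0 with h1 | h1
      · exact absurd h1 (ne_of_gt (Real.rpow_pos_of_pos hζ p))
      · exact h1
    · intro h0; rw [h0, mul_zero]
  -- h is strictly decreasing on (0, ∞)
  have hanti : StrictAntiOn h (Set.Ioi 0) := by
    intro x hx y hy hxy
    have hx' : (0:ℝ) < x := hx
    have h1 : a * y ^ (1 - p) < a * x ^ (1 - p) := by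
      have := Real.rpow_lt_rpow_of_neg hx' hxy (by linarith : 1 - p < 0)
      nlinarith
    have h2 : b * Real.log x < b * Real.log y :=
      (mul_lt_mul_iff_right₀ hb).mpr (Real.log_lt_log hx' hxy)
    simp only [hh]
    linarith
  -- continuity on (0, ∞)
  have hcont : ContinuousOn h (Set.Ioi 0) := by
    apply ContinuousOn.sub
    · exact continuousOn_const.mul (ContinuousOn.rpow_const continuousOn_id
        (fun x hx => Or.inl (ne_of_gt hx)))
    · exact continuousOn_const.add (continuousOn_const.mul
        (Real.continuousOn_log.mono (fun x hx => ne_of_gt hx)))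
  -- h → atTop as ζ → 0⁺
  have htop : Tendsto h (nhdsWithin 0 (Set.Ioi 0)) atTop := by
    have h1 : Tendsto (fun ζ : ℝ => -(c + b * Real.log ζ)) (nhdsWithin 0 (Set.Ioi 0)) atTop := by
      have : Tendsto (fun ζ : ℝ => b * Real.log ζ) (nhdsWithin 0 (Set.Ioi 0)) atBot :=
        Real.tendsto_log_nhdsGT_zero.const_mul_atBot hb
      exact tendsto_neg_atBot_atTop.comp (tendsto_atBot_add_const_left _ c this)
    apply tendsto_atTop_mono' _ _ h1
    filter_upwards [self_mem_nhdsWithin] with ζ hζ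
    have : 0 < a * ζ ^ (1 - p) := mul_pos ha (Real.rpow_pos_of_pos hζ _)
    simp only [hh]; linarith
  -- h → atBot as ζ → ∞
  have hbot : Tendsto h atTop atBot := by
    have h1 : Tendsto (fun ζ : ℝ => a * ζ ^ (1 - p)) atTop (nhds 0) := by
      have := (tendsto_rpow_neg_atTop (y := p - 1) (by linarith)).const_mul a
      simpa [neg_sub] using this
    have h2 : Tendsto (fun ζ : ℝ => -(c + b * Real.log ζ)) atTop atBot := by
      have : Tendsto (fun ζ : ℝ => b * Real.log ζ) atTop atTop :=
        Real.tendsto_log_atTop.const_mul_atTop hb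
      exact tendsto_neg_atTop_atBot.comp (tendsto_atTop_add_const_left _ c this)
    simpa [hh, sub_eq_add_neg] using h1.add_atBot h2
  -- find points where h is positive / negative
  obtain ⟨x, hx0, hxpos⟩ : ∃ x : ℝ, 0 < x ∧ 0 < h x := by
    have := (htop.eventually_gt_atTop 0).and self_mem_nhdsWithin
    rcases this.exists with ⟨x, hx1, hx2⟩
    exact ⟨x, hx2, hx1⟩
  obtain ⟨y, hyx, hyneg⟩ : ∃ y : ℝ, x < y ∧ h y < 0 := by
    have := (hbot.eventually_lt_atBot 0).and (eventually_gt_atTop x)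
    rcases this.exists with ⟨y, hy1, hy2⟩
    exact ⟨y, hy2, hy1⟩
  have hy0 : 0 < y := hx0.trans hyx
  -- IVT on [x, y]
  have hIcc : Set.Icc x y ⊆ Set.Ioi 0 := fun z hz => lt_of_lt_of_le hx0 hz.1
  have : (0:ℝ) ∈ Set.Icc (h y) (h x) := ⟨le_of_lt hyneg, le_of_lt hxpos⟩
  obtain ⟨ζ, hζmem, hζ0⟩ := intermediate_value_Icc' (le_of_lt hyx) (hcont.mono hIcc) this
  have hζpos : 0 < ζ := lt_of_lt_of_le hx0 hζmem.1
  refine ⟨ζ, ⟨hζpos, (key ζ hζpos).mpr hζ0⟩, ?_⟩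
  rintro ξ ⟨hξpos, hξeq⟩
  have hξ0 : h ξ = 0 := (key ξ hξpos).mp hξeq
  exact hanti.injOn hξpos hζpos (by rw [hξ0, hζ0])
end

section
/- Let p > 1, a > 0, b > 0 and c ∈ ℝ, define g : (0,∞) → ℝ by g(ζ) = (a/2)·ζ² − (1/(p+1))·ζ^{p+1}·(c + b·log ζ) + (b/(p+1)²)·ζ^{p+1}, and let ζ* > 0 be the unique zero of g′(ζ) = a·ζ − ζ^p·(c + b·log ζ). Then g′(ζ) > 0 for 0 < ζ < ζ*, g′(ζ) < 0 for ζ > ζ*; consequently g is strictly increasing on (0, ζ*], strictly decreasing on [ζ*, ∞), and attains its global maximum over (0,∞) at ζ = ζ*. -/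
private lemma stmt8_deriv (p a b c : ℝ) (hp : 1 < p) {ζ : ℝ} (hζ : 0 < ζ) :
    HasDerivAt (fun ζ : ℝ => a / 2 * ζ ^ (2 : ℝ)
        - 1 / (p + 1) * ζ ^ (p + 1) * (c + b * Real.log ζ)
        + b / (p + 1) ^ 2 * ζ ^ (p + 1))
      (a * ζ - ζ ^ p * (c + b * Real.log ζ)) ζ := by
  have hζ0 : ζ ≠ 0 := hζ.ne'
  have hp1 : p + 1 ≠ 0 := by linarith
  have h1 : HasDerivAt (fun x : ℝ => x ^ (2 : ℝ)) (2 * ζ ^ ((2 : ℝ) - 1)) ζ :=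
    Real.hasDerivAt_rpow_const (Or.inl hζ0)
  have h2 : HasDerivAt (fun x : ℝ => x ^ (p + 1)) ((p + 1) * ζ ^ (p + 1 - 1)) ζ :=
    Real.hasDerivAt_rpow_const (Or.inl hζ0)
  have h3 : HasDerivAt (fun x : ℝ => c + b * Real.log x) (b * ζ⁻¹) ζ :=
    ((Real.hasDerivAt_log hζ0).const_mul b).const_add c
  have h := ((h1.const_mul (a / 2)).sub
      (((h2.const_mul (1 / (p + 1))).mul h3))).add (h2.const_mul (b / (p + 1) ^ 2))
  refine h.congr_deriv ?_
  have e1 : ζ ^ ((2 : ℝ) - 1) = ζ := by norm_num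
  have e2 : ζ ^ (p + 1 - 1) = ζ ^ p := by congr 1; ring
  have e3 : ζ ^ (p + 1) = ζ ^ p * ζ := by
    rw [Real.rpow_add hζ, Real.rpow_one]
  rw [e1, e2, e3]
  field_simp
  ring

/-- If `ζ* > 0` is the zero of `g′(ζ) = aζ − ζ^p (c + b log ζ)`, then `g′ > 0` on
`(0, ζ*)`, `g′ < 0` on `(ζ*, ∞)`; hence the fibering map `g` is strictly increasing on
`(0, ζ*]`, strictly decreasing on `[ζ*, ∞)`, and attains its global maximum over
`(0, ∞)` at `ζ*`. -/
theorem stmt_8 (p a b c : ℝ) (hp : 1 < p) (ha : 0 < a) (hb : 0 < b)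
    (g : ℝ → ℝ)
    (hg : ∀ ζ : ℝ, g ζ = a / 2 * ζ ^ (2 : ℝ)
        - 1 / (p + 1) * ζ ^ (p + 1) * (c + b * Real.log ζ)
        + b / (p + 1) ^ 2 * ζ ^ (p + 1))
    (ζs : ℝ) (hζs : 0 < ζs)
    (hcrit : a * ζs - ζs ^ p * (c + b * Real.log ζs) = 0) :
    (∀ ζ : ℝ, 0 < ζ → ζ < ζs → 0 < a * ζ - ζ ^ p * (c + b * Real.log ζ)) ∧
    (∀ ζ : ℝ, ζs < ζ → a * ζ - ζ ^ p * (c + b * Real.log ζ) < 0) ∧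
    StrictMonoOn g (Set.Ioc 0 ζs) ∧
    StrictAntiOn g (Set.Ici ζs) ∧
    (∀ ζ : ℝ, 0 < ζ → g ζ ≤ g ζs) := by
  have hgf : g = fun ζ : ℝ => a / 2 * ζ ^ (2 : ℝ)
        - 1 / (p + 1) * ζ ^ (p + 1) * (c + b * Real.log ζ)
        + b / (p + 1) ^ 2 * ζ ^ (p + 1) := funext hg
  subst hgf
  set φ : ℝ → ℝ := fun ζ => a * ζ ^ (1 - p) - (c + b * Real.log ζ) with hφ
  -- factorization: g'(ζ) = ζ^p * φ(ζ) for ζ > 0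
  have hfact : ∀ ζ : ℝ, 0 < ζ →
      a * ζ - ζ ^ p * (c + b * Real.log ζ) = ζ ^ p * φ ζ := by
    intro ζ hζ
    have hmul : ζ ^ p * ζ ^ (1 - p) = ζ := by
      rw [← Real.rpow_add hζ]; norm_num
    simp only [hφ]
    rw [mul_sub, show ζ ^ p * (a * ζ ^ (1 - p)) = a * (ζ ^ p * ζ ^ (1 - p)) by ring, hmul]
  -- φ is strictly decreasing on (0, ∞)
  have hφanti : ∀ x y : ℝ, 0 < x → x < y → φ y < φ x := by
    intro x y hx hxy
    have h1 : a * y ^ (1 - p) < a * x ^ (1 - p) :=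
      mul_lt_mul_of_pos_left (Real.rpow_lt_rpow_of_neg hx hxy (by linarith)) ha
    have h2 : b * Real.log x < b * Real.log y :=
      mul_lt_mul_of_pos_left (Real.log_lt_log hx hxy) hb
    simp only [hφ]; linarith
  have hφs : φ ζs = 0 := by
    have := hfact ζs hζs
    rw [hcrit] at this
    have hpow : (0:ℝ) < ζs ^ p := Real.rpow_pos_of_pos hζs p
    have := this.symm
    rcases mul_eq_zero.mp this with h | h
    · exact absurd h hpow.ne'
    · exact h
  have hpos : ∀ ζ : ℝ, 0 < ζ → ζ < ζs → 0 < a * ζ - ζ ^ p * (c + b * Real.log ζ) := by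
    intro ζ hζ hlt
    rw [hfact ζ hζ]
    exact mul_pos (Real.rpow_pos_of_pos hζ p) (by have := hφanti ζ ζs hζ hlt; linarith)
  have hneg : ∀ ζ : ℝ, ζs < ζ → a * ζ - ζ ^ p * (c + b * Real.log ζ) < 0 := by
    intro ζ hlt
    have hζ : 0 < ζ := hζs.trans hlt
    rw [hfact ζ hζ]
    have := hφanti ζs ζ hζs hlt
    exact mul_neg_of_pos_of_neg (Real.rpow_pos_of_pos hζ p) (by linarith)
  have hderiv : ∀ ζ : ℝ, 0 < ζ →
      HasDerivAt (fun ζ : ℝ => a / 2 * ζ ^ (2 : ℝ)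
        - 1 / (p + 1) * ζ ^ (p + 1) * (c + b * Real.log ζ)
        + b / (p + 1) ^ 2 * ζ ^ (p + 1))
      (a * ζ - ζ ^ p * (c + b * Real.log ζ)) ζ := fun ζ hζ => stmt8_deriv p a b c hp hζ
  have hmono : StrictMonoOn (fun ζ : ℝ => a / 2 * ζ ^ (2 : ℝ)
        - 1 / (p + 1) * ζ ^ (p + 1) * (c + b * Real.log ζ)
        + b / (p + 1) ^ 2 * ζ ^ (p + 1)) (Set.Ioc 0 ζs) := by
    apply strictMonoOn_of_deriv_pos (convex_Ioc 0 ζs)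
    · intro x hx
      exact (hderiv x hx.1).continuousAt.continuousWithinAt
    · intro x hx
      rw [interior_Ioc] at hx
      rw [(hderiv x hx.1).deriv]
      exact hpos x hx.1 hx.2
  have hanti : StrictAntiOn (fun ζ : ℝ => a / 2 * ζ ^ (2 : ℝ)
        - 1 / (p + 1) * ζ ^ (p + 1) * (c + b * Real.log ζ)
        + b / (p + 1) ^ 2 * ζ ^ (p + 1)) (Set.Ici ζs) := by
    apply strictAntiOn_of_deriv_neg (convex_Ici ζs)
    · intro x hx
      exact (hderiv x (lt_of_lt_of_le hζs hx)).continuousAt.continuousWithinAt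
    · intro x hx
      rw [interior_Ici] at hx
      rw [(hderiv x (hζs.trans hx)).deriv]
      exact hneg x hx
  refine ⟨hpos, hneg, hmono, hanti, ?_⟩
  intro ζ hζ
  rcases le_or_gt ζ ζs with h | h
  · exact hmono.monotoneOn ⟨hζ, h⟩ ⟨hζs, le_refl _⟩ h
  · exact le_of_lt (hanti Set.self_mem_Ici (le_of_lt h) h)
end

section
/- Let p > 1, a > 0, b > 0 and c ∈ ℝ with a ≥ c, define g : (0,∞) → ℝ by g(ζ) = (a/2)·ζ² − (1/(p+1))·ζ^{p+1}·(c + b·log ζ) + (b/(p+1)²)·ζ^{p+1}, and let ζ* > 0 be the unique zero of g′(ζ) = a·ζ − ζ^p·(c + b·log ζ). Then ζ* ≥ 1, and for every μ with 0 < μ < 1 one has g(μ) < g(1) and μ·g′(μ) > 0. -/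
/-- If `a ≥ c` and `ζ* > 0` is the unique zero of `g′(ζ) = aζ − ζ^p (c + b log ζ)`,
then `ζ* ≥ 1`, and for every `0 < μ < 1` one has `g(μ) < g(1)` and `μ·g′(μ) > 0`. -/
theorem stmt_9 (p a b c : ℝ) (hp : 1 < p) (ha : 0 < a) (hb : 0 < b) (hac : c ≤ a)
    (g : ℝ → ℝ)
    (hg : ∀ ζ : ℝ, g ζ = a / 2 * ζ ^ (2 : ℝ)
        - 1 / (p + 1) * ζ ^ (p + 1) * (c + b * Real.log ζ)
        + b / (p + 1) ^ 2 * ζ ^ (p + 1))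
    (ζs : ℝ) (hζs : 0 < ζs)
    (hcrit : a * ζs - ζs ^ p * (c + b * Real.log ζs) = 0)
    (huniq : ∀ ζ : ℝ, 0 < ζ → a * ζ - ζ ^ p * (c + b * Real.log ζ) = 0 → ζ = ζs) :
    1 ≤ ζs ∧
    ∀ μ : ℝ, 0 < μ → μ < 1 →
      g μ < g 1 ∧ 0 < μ * (a * μ - μ ^ p * (c + b * Real.log μ)) := by
  have hpos : ∀ μ : ℝ, 0 < μ → μ < 1 → 0 < a * μ - μ ^ p * (c + b * Real.log μ) := by
    intro μ hμ hμ1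
    have hlog : Real.log μ < 0 := Real.log_neg hμ hμ1
    have hμp : 0 < μ ^ p := Real.rpow_pos_of_pos hμ p
    have hlt : μ ^ p < μ := by
      have := Real.rpow_lt_rpow_of_exponent_gt hμ hμ1 hp
      simpa [Real.rpow_one] using this
    nlinarith [mul_pos ha (sub_pos.2 hlt), mul_nonneg hμp.le (sub_nonneg.2 hac),
      mul_pos hμp (mul_pos hb (neg_pos.2 hlog))]
  have hζ1 : 1 ≤ ζs := by
    by_contra h
    push_neg at h
    have := hpos ζs hζs h
    linarith
  have hd : ∀ x : ℝ, 0 < x →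
      HasDerivAt g (a * x - x ^ p * (c + b * Real.log x)) x := by
    intro x hx
    have hgf : g = fun ζ : ℝ => a / 2 * ζ ^ (2 : ℝ)
        - 1 / (p + 1) * ζ ^ (p + 1) * (c + b * Real.log ζ)
        + b / (p + 1) ^ 2 * ζ ^ (p + 1) := funext hg
    rw [hgf]
    have h2 : HasDerivAt (fun ζ : ℝ => ζ ^ (2 : ℝ)) (2 * x ^ ((2:ℝ) - 1)) x :=
      Real.hasDerivAt_rpow_const (Or.inl hx.ne')
    have hp1 : HasDerivAt (fun ζ : ℝ => ζ ^ (p + 1)) ((p + 1) * x ^ (p + 1 - 1)) x :=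
      Real.hasDerivAt_rpow_const (Or.inl hx.ne')
    have hlog : HasDerivAt Real.log x⁻¹ x := Real.hasDerivAt_log hx.ne'
    have hv : HasDerivAt (fun ζ => c + b * Real.log ζ) (b * x⁻¹) x :=
      (hlog.const_mul b).const_add c
    have hu : HasDerivAt (fun ζ : ℝ => 1 / (p + 1) * ζ ^ (p + 1))
        (1 / (p + 1) * ((p + 1) * x ^ (p + 1 - 1))) x := hp1.const_mul _
    have hprod := hu.mul hv
    have ht1 : HasDerivAt (fun ζ : ℝ => a / 2 * ζ ^ (2 : ℝ))
        (a / 2 * (2 * x ^ ((2:ℝ) - 1))) x := h2.const_mul _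
    have ht3 : HasDerivAt (fun ζ : ℝ => b / (p + 1) ^ 2 * ζ ^ (p + 1))
        (b / (p + 1) ^ 2 * ((p + 1) * x ^ (p + 1 - 1))) x := hp1.const_mul _
    have htot := (ht1.sub hprod).add ht3
    convert htot using 1
    case e'_4 => rfl
    case e'_5 => rfl
    case e'_8 => rfl
    have hx1 : x ^ ((2:ℝ) - 1) = x := by norm_num
    have hxp : x ^ (p + 1 - 1) = x ^ p := by norm_num
    have hxp1 : x ^ (p + 1) = x ^ p * x := Real.rpow_add_one hx.ne' p
    rw [hx1, hxp, hxp1]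
    have hp0 : p + 1 ≠ 0 := by linarith
    field_simp
    ring
  refine ⟨hζ1, fun μ hμ hμ1 => ⟨?_, mul_pos hμ (hpos μ hμ hμ1)⟩⟩
  have hmono : StrictMonoOn g (Set.Icc μ 1) := by
    apply strictMonoOn_of_deriv_pos (convex_Icc μ 1)
    · intro x hx
      exact (hd x (lt_of_lt_of_le hμ hx.1)).continuousAt.continuousWithinAt
    · intro x hx
      rw [interior_Icc] at hx
      rw [(hd x (hμ.trans hx.1)).deriv]
      exact hpos x (hμ.trans hx.1) hx.2
  exact hmono (Set.left_mem_Icc.2 hμ1.le) (Set.right_mem_Icc.2 hμ1.le) hμ1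
end

section
/- Let α > 1, t₀ ∈ ℝ and T ∈ (t₀, ∞], and let N : [t₀, T) → ℝ be twice differentiable with N(t) > 0, N′(t) > 0 and N(t)·N″(t) − α·(N′(t))² ≥ 0 for all t ∈ [t₀, T). Then for every t ∈ [t₀, T), N(t)^{1−α} ≤ N(t₀)^{1−α} · ( 1 − (α−1)·(N′(t₀)/N(t₀))·(t − t₀) ). In particular, T ≤ t₀ + N(t₀)/((α−1)·N′(t₀)). -/
open Set Real

private lemma aux_tangent (α t₀ t : ℝ) (hα : 1 < α) (ht : t₀ ≤ t)
    (N N' N'' : ℝ → ℝ)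
    (hd1 : ∀ s ∈ Icc t₀ t, HasDerivWithinAt N (N' s) (Icc t₀ t) s)
    (hd2 : ∀ s ∈ Icc t₀ t, HasDerivWithinAt N' (N'' s) (Icc t₀ t) s)
    (hpos : ∀ s ∈ Icc t₀ t, 0 < N s)
    (hpos' : ∀ s ∈ Icc t₀ t, 0 < N' s)
    (hconc : ∀ s ∈ Icc t₀ t, 0 ≤ N s * N'' s - α * N' s ^ 2) :
    N t ^ (1 - α) ≤ N t₀ ^ (1 - α) * (1 - (α - 1) * (N' t₀ / N t₀) * (t - t₀)) := by
  set D := Icc t₀ t with hD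
  have ht₀D : t₀ ∈ D := left_mem_Icc.mpr ht
  have htD : t ∈ D := right_mem_Icc.mpr ht
  set M : ℝ → ℝ := fun s => N s ^ (1 - α) with hM
  set M' : ℝ → ℝ := fun s => (1 - α) * (N s ^ (-α) * N' s) with hM'
  set M'' : ℝ → ℝ := fun s =>
    (1 - α) * ((N' s * (-α) * N s ^ (-α - 1)) * N' s + N s ^ (-α) * N'' s) with hM''
  -- derivative of M
  have hdM : ∀ s ∈ D, HasDerivWithinAt M (M' s) D s := by
    intro s hs
    have h := (hd1 s hs).rpow_const (p := 1 - α) (Or.inl (hpos s hs).ne')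
    have he : (1 : ℝ) - α - 1 = -α := by ring
    rw [he] at h
    convert h using 1
    simp only [hM']; ring
  -- derivative of M'
  have hdM' : ∀ s ∈ D, HasDerivWithinAt M' (M'' s) D s := by
    intro s hs
    have h1 := (hd1 s hs).rpow_const (p := -α) (Or.inl (hpos s hs).ne')
    have h2 := (h1.mul (hd2 s hs)).const_mul (1 - α)
    exact h2
  -- second derivative nonpositive
  have hM''le : ∀ s ∈ D, M'' s ≤ 0 := by
    intro s hs
    have hp := hpos s hs
    have hX : 0 < N s ^ (-α - 1) := Real.rpow_pos_of_pos hp _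
    have hrw : N s ^ (-α) = N s ^ (-α - 1) * N s := by
      rw [← Real.rpow_add_one hp.ne' (-α - 1)]; ring_nf
    have hc := hconc s hs
    simp only [hM'', hrw]
    nlinarith [mul_nonneg hX.le hc]
  -- M' is antitone on D
  have hcD : Convex ℝ D := convex_Icc _ _
  have hanti : AntitoneOn M' D := by
    refine antitoneOn_of_hasDerivWithinAt_nonpos hcD
      (fun s hs => (hdM' s hs).continuousWithinAt)
      (fun x hx => ((hdM' x (interior_subset hx)).mono interior_subset))
      (fun x hx => hM''le x (interior_subset hx))
  -- tangent line comparison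
  set g : ℝ → ℝ := fun s => M t₀ + M' t₀ * (s - t₀) - M s with hg
  have hdg : ∀ s ∈ D, HasDerivWithinAt g (M' t₀ - M' s) D s := by
    intro s hs
    have hlin : HasDerivWithinAt (fun x => M t₀ + M' t₀ * (x - t₀)) (M' t₀) D s := by
      have := (((hasDerivWithinAt_id s D).sub_const t₀).const_mul (M' t₀)).const_add (M t₀)
      simpa using this
    exact hlin.sub (hdM s hs)
  have hmono : MonotoneOn g D := by
    refine monotoneOn_of_hasDerivWithinAt_nonneg hcD
      (fun s hs => (hdg s hs).continuousWithinAt)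
      (fun x hx => ((hdg x (interior_subset hx)).mono interior_subset))
      (fun x hx => ?_)
    have hxD : x ∈ D := interior_subset hx
    have hx1 : t₀ ≤ x := hxD.1
    have := hanti ht₀D hxD hx1
    linarith
  have hgt : g t₀ ≤ g t := hmono ht₀D htD ht
  have hgt₀ : g t₀ = 0 := by simp [hg]
  have hkey : M t ≤ M t₀ + M' t₀ * (t - t₀) := by
    have : (0:ℝ) ≤ g t := hgt₀ ▸ hgt
    simp only [hg] at this; linarith
  -- algebra to rewrite the tangent line
  have hp0 := hpos t₀ ht₀D
  have h1 : N t₀ ^ (1 - α) = N t₀ ^ (-α) * N t₀ := by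
    rw [← Real.rpow_add_one hp0.ne' (-α)]; ring_nf
  have heq : N t₀ ^ (1 - α) * (1 - (α - 1) * (N' t₀ / N t₀) * (t - t₀))
      = M t₀ + M' t₀ * (t - t₀) := by
    simp only [hM, hM']
    rw [h1]
    field_simp
    ring
  rw [heq]
  exact hkey

/-- Quantitative concavity blow-up estimate: if `α > 1`, `T ∈ (t₀, ∞]`, and `N` is
twice differentiable on `[t₀, T)` with `N > 0`, `N′ > 0` and `N·N″ − α·(N′)² ≥ 0`
there, then `N^{1−α}` lies below its tangent line at `t₀`:
`N(t)^{1−α} ≤ N(t₀)^{1−α}·(1 − (α−1)(N′(t₀)/N(t₀))(t − t₀))` for all `t ∈ [t₀, T)`;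
in particular `T ≤ t₀ + N(t₀)/((α−1)·N′(t₀))`. -/
theorem stmt_11 (α t₀ : ℝ) (hα : 1 < α) (T : EReal) (hT : (t₀ : EReal) < T)
    (N N' N'' : ℝ → ℝ)
    (hd1 : ∀ t : ℝ, t₀ ≤ t → (t : EReal) < T →
      HasDerivWithinAt N (N' t) {s : ℝ | t₀ ≤ s ∧ (s : EReal) < T} t)
    (hd2 : ∀ t : ℝ, t₀ ≤ t → (t : EReal) < T →
      HasDerivWithinAt N' (N'' t) {s : ℝ | t₀ ≤ s ∧ (s : EReal) < T} t)
    (hpos : ∀ t : ℝ, t₀ ≤ t → (t : EReal) < T → 0 < N t)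
    (hpos' : ∀ t : ℝ, t₀ ≤ t → (t : EReal) < T → 0 < N' t)
    (hconc : ∀ t : ℝ, t₀ ≤ t → (t : EReal) < T → 0 ≤ N t * N'' t - α * N' t ^ 2) :
    (∀ t : ℝ, t₀ ≤ t → (t : EReal) < T →
      N t ^ (1 - α) ≤ N t₀ ^ (1 - α) * (1 - (α - 1) * (N' t₀ / N t₀) * (t - t₀))) ∧
    T ≤ ((t₀ + N t₀ / ((α - 1) * N' t₀) : ℝ) : EReal) := by
  have main : ∀ t : ℝ, t₀ ≤ t → (t : EReal) < T →
      N t ^ (1 - α) ≤ N t₀ ^ (1 - α) * (1 - (α - 1) * (N' t₀ / N t₀) * (t - t₀)) := by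
    intro t ht0 htT
    have hsub : Icc t₀ t ⊆ {s : ℝ | t₀ ≤ s ∧ (s : EReal) < T} := by
      intro s hs
      refine ⟨hs.1, lt_of_le_of_lt ?_ htT⟩
      exact_mod_cast EReal.coe_le_coe_iff.mpr hs.2
    refine aux_tangent α t₀ t hα ht0 N N' N'' ?_ ?_ ?_ ?_ ?_
    · exact fun s hs => (hd1 s (hsub hs).1 (hsub hs).2).mono hsub
    · exact fun s hs => (hd2 s (hsub hs).1 (hsub hs).2).mono hsub
    · exact fun s hs => hpos s (hsub hs).1 (hsub hs).2
    · exact fun s hs => hpos' s (hsub hs).1 (hsub hs).2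
    · exact fun s hs => hconc s (hsub hs).1 (hsub hs).2
  refine ⟨main, ?_⟩
  by_contra hcon
  push_neg at hcon
  set t₁ : ℝ := t₀ + N t₀ / ((α - 1) * N' t₀) with ht₁
  have hp0 : 0 < N t₀ := hpos t₀ le_rfl hT
  have hp0' : 0 < N' t₀ := hpos' t₀ le_rfl hT
  have hd : 0 < (α - 1) * N' t₀ := mul_pos (by linarith) hp0'
  have ht01 : t₀ ≤ t₁ := le_add_of_nonneg_right (div_nonneg hp0.le hd.le)
  have hlt : (t₁ : EReal) < T := hcon
  have h := main t₁ ht01 hlt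
  have hfac : 1 - (α - 1) * (N' t₀ / N t₀) * (t₁ - t₀) = 0 := by
    have : t₁ - t₀ = N t₀ / ((α - 1) * N' t₀) := by rw [ht₁]; ring
    rw [this]
    field_simp
    rw [div_self (by linarith : α - 1 ≠ 0), sub_self]
  rw [hfac, mul_zero] at h
  have hposN : 0 < N t₁ ^ (1 - α) := Real.rpow_pos_of_pos (hpos t₁ ht01 hlt) _
  linarith
end
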